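/- Let N be a Poisson random variable with mean np, where n ≥ 1 is an integer and p ∈ (0,1], and let h(x) = -x·log x. Then |E[h(N/n)] - h(p)| ≤ 1/n. -/

import Mathlib

theorem stmt_14 (n : ℕ) (hn : 1 ≤ n) (p : ℝ) (hp : p ∈ Set.Ioc (0 : ℝ) 1) :
    |(∑' j : ℕ, Real.exp (-(n * p)) * (n * p) ^ j / (j.factorial : ℝ) *
          (-((j : ℝ) / n) * Real.log ((j : ℝ) / n))) -
        (-p * Real.log p)| ≤ 1 / n := by
  obtain ⟨hp0, hp1⟩ := hp
  have hn0 : (0 : ℝ) < n := by exact_mod_cast Nat.lt_of_lt_of_le Nat.zero_lt_one hn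
  set L : ℝ := (n : ℝ) * p with hLdef
  have hL : 0 < L := mul_pos hn0 hp0
  set f : ℕ → ℝ := fun j => Real.exp (-L) * L ^ j / (j.factorial : ℝ) with hfdef
  have hfnn : ∀ j, 0 ≤ f j := by
    intro j
    have : (0:ℝ) < (j.factorial : ℝ) := by exact_mod_cast j.factorial_pos
    positivity
  -- f sums to 1
  have hf_sum : HasSum f 1 := by
    have h1 : HasSum (fun j : ℕ => L ^ j / (j.factorial : ℝ)) (Real.exp L) := by
      rw [Real.exp_eq_exp_ℝ]
      exact NormedSpace.expSeries_div_hasSum_exp L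
    have h2 := h1.mul_left (Real.exp (-L))
    have : Real.exp (-L) * Real.exp L = 1 := by
      rw [← Real.exp_add]; simp
    rw [this] at h2
    convert h2 using 2 with j
    · rfl
    simp [f, mul_div_assoc]
  -- shift identity
  have hfs : ∀ k : ℕ, f (k + 1) * ((k : ℝ) + 1) = L * f k := by
    intro k
    have hfac : (0:ℝ) < (k.factorial : ℝ) := by exact_mod_cast k.factorial_pos
    simp only [f, Nat.factorial_succ]
    push_cast
    field_simp
    ring
  -- mean
  have hm_sum : HasSum (fun k : ℕ => (k : ℝ) * f k) L := by
    have h1 : HasSum (fun k : ℕ => ((k + 1 : ℕ) : ℝ) * f (k + 1)) L := by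
      have h := hf_sum.mul_left L
      rw [mul_one] at h
      convert h using 2 with k
      · rfl
      push_cast
      rw [mul_comm]
      exact hfs k
    have := (hasSum_nat_add_iff (f := fun k : ℕ => (k : ℝ) * f k) 1).mp h1
    simpa using this
  -- sum of f(k+1)
  have htail : HasSum (fun k : ℕ => f (k + 1)) (1 - f 0) := by
    have h0 : HasSum f (1 - f 0 + ∑ i ∈ Finset.range 1, f i) := by
      simpa using hf_sum
    exact (hasSum_nat_add_iff (f := f) 1).mpr h0
  -- sum of f k / (k+1)
  have hv_eq : ∀ k : ℕ, f k / ((k : ℝ) + 1) = f (k + 1) / L := by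
    intro k
    have hk1 : ((k : ℝ) + 1) ≠ 0 := by positivity
    rw [div_eq_div_iff hk1 (ne_of_gt hL)]
    rw [mul_comm (f k) L, ← hfs k]
  have hv_sum : HasSum (fun k : ℕ => f k / ((k : ℝ) + 1)) ((1 - f 0) / L) := by
    have := htail.div_const L
    convert this using 2 with k
    · rfl
    exact hv_eq k
  -- lower and upper bounding functions for g k = f k * log((k+1)/L)
  set g : ℕ → ℝ := fun k => f k * Real.log (((k : ℝ) + 1) / L) with hgdef
  set lo : ℕ → ℝ := fun k => f k - L * (f k / ((k : ℝ) + 1)) with hlodef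
  set hi : ℕ → ℝ := fun k => ((k : ℝ) * f k + f k) / L - f k with hhidef
  have hlo_sum : HasSum lo (f 0) := by
    have := hf_sum.sub (hv_sum.mul_left L)
    have heq : 1 - L * ((1 - f 0) / L) = f 0 := by
      field_simp
      ring
    rwa [heq] at this
  have hhi_sum : HasSum hi (1 / L) := by
    have := ((hm_sum.add hf_sum).div_const L).sub hf_sum
    have heq : (L + 1) / L - 1 = 1 / L := by field_simp; ring
    rwa [heq] at this
  have hx : ∀ k : ℕ, (0:ℝ) < ((k : ℝ) + 1) / L := by
    intro k; positivity
  have hlow : ∀ k, lo k ≤ g k := by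
    intro k
    have hk1 : (0:ℝ) < (k : ℝ) + 1 := by positivity
    have h1 : Real.log ((((k : ℝ) + 1) / L)⁻¹) ≤ (((k : ℝ) + 1) / L)⁻¹ - 1 :=
      Real.log_le_sub_one_of_pos (inv_pos.mpr (hx k))
    rw [Real.log_inv] at h1
    have h2 : 1 - (((k : ℝ) + 1) / L)⁻¹ ≤ Real.log (((k : ℝ) + 1) / L) := by linarith
    have h3 := mul_le_mul_of_nonneg_left h2 (hfnn k)
    have h4 : f k * (1 - (((k : ℝ) + 1) / L)⁻¹) = lo k := by
      rw [inv_div]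
      simp only [lo]
      field_simp
    rw [h4] at h3
    exact h3
  have hup : ∀ k, g k ≤ hi k := by
    intro k
    have hk1 : (0:ℝ) < (k : ℝ) + 1 := by positivity
    have h1 : Real.log (((k : ℝ) + 1) / L) ≤ ((k : ℝ) + 1) / L - 1 :=
      Real.log_le_sub_one_of_pos (hx k)
    have h3 := mul_le_mul_of_nonneg_left h1 (hfnn k)
    have h4 : f k * (((k : ℝ) + 1) / L - 1) = hi k := by
      simp only [hi]
      field_simp
    rw [h4] at h3
    exact h3
  -- summability of g
  have hg_summable : Summable g := by
    have hd : Summable (fun k => g k - lo k) :=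
      Summable.of_nonneg_of_le (fun k => by linarith [hlow k])
        (fun k => by linarith [hlow k, hup k])
        (hhi_sum.summable.sub hlo_sum.summable)
    have := hd.add hlo_sum.summable
    simpa using this
  set S : ℝ := ∑' k, g k with hSdef
  have hS_ge : f 0 ≤ S := by
    rw [← hlo_sum.tsum_eq]
    exact Summable.tsum_le_tsum hlow hlo_sum.summable hg_summable
  have hS_le : S ≤ 1 / L := by
    rw [← hhi_sum.tsum_eq]
    exact Summable.tsum_le_tsum hup hg_summable hhi_sum.summable
  have hS0 : 0 ≤ S := le_trans (hfnn 0) hS_ge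
  -- the main sum
  set t : ℕ → ℝ := fun j => f j * (-((j : ℝ) / n) * Real.log ((j : ℝ) / n)) with htdef
  have ht0 : t 0 = 0 := by simp [t]
  have hts : ∀ k : ℕ, t (k + 1) = -p * (g k + f k * Real.log p) := by
    intro k
    have hk1 : ((k : ℝ) + 1) ≠ 0 := by positivity
    have hnn : (n : ℝ) ≠ 0 := ne_of_gt hn0
    have hpn : p ≠ 0 := ne_of_gt hp0
    have e1 : (((k : ℕ) + 1 : ℕ) : ℝ) / n = (((k : ℝ) + 1) / L) * p := by
      push_cast
      field_simp [hLdef]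
      ring
    have e2 : f (k + 1) * ((((k : ℕ) + 1 : ℕ) : ℝ) / n) = p * f k := by
      push_cast
      rw [div_eq_mul_inv, ← mul_assoc, hfs k, hLdef]
      field_simp
    have e3 : Real.log ((((k : ℕ) + 1 : ℕ) : ℝ) / n)
        = Real.log (((k : ℝ) + 1) / L) + Real.log p := by
      rw [e1, Real.log_mul (by positivity) hpn]
    simp only [t]
    rw [e3]
    have : f (k + 1) * (-((((k : ℕ) + 1 : ℕ) : ℝ) / n) *
        (Real.log (((k : ℝ) + 1) / L) + Real.log p))
        = -(f (k + 1) * ((((k : ℕ) + 1 : ℕ) : ℝ) / n)) *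
          (Real.log (((k : ℝ) + 1) / L) + Real.log p) := by ring
    rw [this, e2]
    simp only [g]
    ring
  have ht_sum : HasSum t (-p * (S + Real.log p)) := by
    have h1 : HasSum (fun k => g k + f k * Real.log p) (S + Real.log p) := by
      have := (hg_summable.hasSum).add (hf_sum.mul_right (Real.log p))
      simpa using this
    have h2 := h1.mul_left (-p)
    have h3 : HasSum (fun k : ℕ => t (k + 1)) (-p * (S + Real.log p)) := by
      convert h2 using 2 with k
      · rfl
      exact hts k
    have := (hasSum_nat_add_iff (f := t) 1).mp h3
    simpa [ht0] using this
  have hgoal : (∑' j : ℕ, Real.exp (-(n * p)) * (n * p) ^ j / (j.factorial : ℝ) *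
          (-((j : ℝ) / n) * Real.log ((j : ℝ) / n))) = -p * (S + Real.log p) :=
    ht_sum.tsum_eq
  rw [hgoal]
  have hrw : -p * (S + Real.log p) - (-p * Real.log p) = -(p * S) := by ring
  rw [hrw, abs_neg, abs_of_nonneg (mul_nonneg (le_of_lt hp0) hS0)]
  calc p * S ≤ p * (1 / L) := by
        exact mul_le_mul_of_nonneg_left hS_le (le_of_lt hp0)
    _ = 1 / n := by
        rw [hLdef]
        field_simp
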